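/- Let T be a finite Δ-group based at a finite group G, over a field k of characteristic not dividing any |T(g,h)|. Let A = ⊕_{g,h ∈ G} ⊕_{x ∈ T(g,h)} k·x, extend m and P linearly, and define u : k → A ⊗ A by u(1) = Σ_{g,h ∈ G} (1/|T(g,h)|) Σ_{x ∈ T(g,h)} x ⊗ Q(x). Then u satisfies the symmetry condition u(1) = Σ P^2(u_2) ⊗ P(u_1), and P^3 = id_A and P(m(a⊗b⊗c)) = m(P(b)⊗P(c)⊗P(a)) hold on A. -/

import Mathlib

open scoped TensorProduct

/-- Transport an element of `T a c` along equalities of the indices. -/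
def castT {G : Type} (T : G → G → Type) {a b c d : G} (h1 : a = b) (h2 : c = d)
    (x : T a c) : T b d := h1 ▸ h2 ▸ x

/-- A Δ-group based at a group `G`: a collection of sets `T(g,h)`, `g,h ∈ G`, with
operations `m : T(g,h⁻¹) × T(h,k⁻¹) × T(h⁻¹g,k⁻¹h) → T(g,k⁻¹)`,
`P : T(g,h) → T(h,g⁻¹h⁻¹)`, `Q : T(g,h) → T(g⁻¹,hg)` satisfying `P³ = id`, `Q² = id`,
`P²Q = QP`, `P(m(a,b,c)) = m(P(b),P(c),P(a))`, `Q(m(a,b,c)) = m(Q(a),Q(c),Q(b))`,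
`m(m(a,b,c),d,e) = m(a,m(b,d,f),m(c,Q(f),e))` and `m(m(f,a,b),P²Q(a),PQ(b)) = f`. -/
structure DeltaGroup (G : Type) [Group G] where
  T : G → G → Type
  m : ∀ g h k : G, T g h⁻¹ → T h k⁻¹ → T (h⁻¹ * g) (k⁻¹ * h) → T g k⁻¹
  P : ∀ g h : G, T g h → T h (g⁻¹ * h⁻¹)
  Q : ∀ g h : G, T g h → T g⁻¹ (h * g)
  hP3 : ∀ (g h : G) (a : T g h),
    P _ _ (P _ _ (P g h a)) =
      castT T (show g = h⁻¹ * (g⁻¹ * h⁻¹)⁻¹ by group)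
        (show h = (g⁻¹ * h⁻¹)⁻¹ * (h⁻¹ * (g⁻¹ * h⁻¹)⁻¹)⁻¹ by group) a
  hQ2 : ∀ (g h : G) (a : T g h),
    Q _ _ (Q g h a) =
      castT T (show g = g⁻¹⁻¹ by group) (show h = h * g * g⁻¹ by group) a
  hPQ : ∀ (g h : G) (a : T g h),
    P _ _ (P _ _ (Q g h a)) =
      castT T (show h⁻¹ = g⁻¹⁻¹ * (h * g)⁻¹ by group)
        (show g⁻¹ * h⁻¹ * h = (h * g)⁻¹ * (g⁻¹⁻¹ * (h * g)⁻¹)⁻¹ by group)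
        (Q _ _ (P g h a))
  hPm : ∀ (g h k : G) (a : T g h⁻¹) (b : T h k⁻¹) (c : T (h⁻¹ * g) (k⁻¹ * h)),
    P _ _ (m g h k a b c) =
      castT T (rfl : k⁻¹ = k⁻¹) (show (k⁻¹ * g)⁻¹ = g⁻¹ * k⁻¹⁻¹ by group)
        (m k⁻¹ (k⁻¹ * h) (k⁻¹ * g)
          (castT T (rfl : k⁻¹ = k⁻¹) (show h⁻¹ * k⁻¹⁻¹ = (k⁻¹ * h)⁻¹ by group)
            (P _ _ b))
          (castT T (rfl : k⁻¹ * h = k⁻¹ * h)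
            (show (h⁻¹ * g)⁻¹ * (k⁻¹ * h)⁻¹ = (k⁻¹ * g)⁻¹ by group) (P _ _ c))
          (castT T (show h⁻¹ = (k⁻¹ * h)⁻¹ * k⁻¹ by group)
            (show g⁻¹ * h⁻¹⁻¹ = (k⁻¹ * g)⁻¹ * (k⁻¹ * h) by group) (P _ _ a)))
  hQm : ∀ (g h k : G) (a : T g h⁻¹) (b : T h k⁻¹) (c : T (h⁻¹ * g) (k⁻¹ * h)),
    Q _ _ (m g h k a b c) =
      castT T (rfl : g⁻¹ = g⁻¹) (show (g⁻¹ * k)⁻¹ = k⁻¹ * g by group)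
        (m g⁻¹ (g⁻¹ * h) (g⁻¹ * k)
          (castT T (rfl : g⁻¹ = g⁻¹) (show h⁻¹ * g = (g⁻¹ * h)⁻¹ by group)
            (Q _ _ a))
          (castT T (show (h⁻¹ * g)⁻¹ = g⁻¹ * h by group)
            (show k⁻¹ * h * (h⁻¹ * g) = (g⁻¹ * k)⁻¹ by group) (Q _ _ c))
          (castT T (show h⁻¹ = (g⁻¹ * h)⁻¹ * g⁻¹ by group)
            (show k⁻¹ * h = (g⁻¹ * k)⁻¹ * (g⁻¹ * h) by group) (Q _ _ b)))
  hmm : ∀ (g h k l : G) (a : T g h⁻¹) (b : T h k⁻¹) (c : T (h⁻¹ * g) (k⁻¹ * h))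
      (d : T k l⁻¹) (e : T (k⁻¹ * g) (l⁻¹ * k)) (f : T (k⁻¹ * h) (l⁻¹ * k)),
    m g k l (m g h k a b c) d e =
      m g h l a (m h k l b d f)
        (castT T (rfl : h⁻¹ * g = h⁻¹ * g) (show (h⁻¹ * l)⁻¹ = l⁻¹ * h by group)
          (m (h⁻¹ * g) (h⁻¹ * k) (h⁻¹ * l)
            (castT T (rfl : h⁻¹ * g = h⁻¹ * g)
              (show k⁻¹ * h = (h⁻¹ * k)⁻¹ by group) c)
            (castT T (show (k⁻¹ * h)⁻¹ = h⁻¹ * k by group)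
              (show l⁻¹ * k * (k⁻¹ * h) = (h⁻¹ * l)⁻¹ by group) (Q _ _ f))
            (castT T (show k⁻¹ * g = (h⁻¹ * k)⁻¹ * (h⁻¹ * g) by group)
              (show l⁻¹ * k = (h⁻¹ * l)⁻¹ * (h⁻¹ * k) by group) e)))
  him : ∀ (g h k : G) (f : T g h⁻¹) (a : T h k⁻¹) (b : T (h⁻¹ * g) (k⁻¹ * h)),
    m g k h (m g h k f a b)
      (castT T (show h⁻¹⁻¹ * (k⁻¹ * h)⁻¹ = k by group)
        (show (k⁻¹ * h)⁻¹ * (h⁻¹⁻¹ * (k⁻¹ * h)⁻¹)⁻¹ = h⁻¹ by group)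
        (P _ _ (P _ _ (Q h k⁻¹ a))))
      (castT T (show k⁻¹ * h * (h⁻¹ * g) = k⁻¹ * g by group)
        (show (h⁻¹ * g)⁻¹⁻¹ * (k⁻¹ * h * (h⁻¹ * g))⁻¹ = h⁻¹ * k by group)
        (P _ _ (Q _ _ b)))
      = f

variable {G : Type} [Group G] [Fintype G] [DecidableEq G]
variable (K : Type) [Field K]
variable (D : DeltaGroup G) [∀ g h : G, Fintype (D.T g h)] [∀ g h : G, DecidableEq (D.T g h)]

/-- The basis of the 3-algebra associated to a finite Δ-group: the disjoint union of the
sets `T(g,h)`. -/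
def BasisT : Type := Σ g : G, Σ h : G, D.T g h

/-- The vector space `A = ⊕_{g,h∈G} ⊕_{x∈T(g,h)} k·x`. -/
def AlgT : Type := BasisT D →₀ K

noncomputable instance : AddCommGroup (AlgT K D) := Finsupp.instAddCommGroup
noncomputable instance : Module K (AlgT K D) := Finsupp.module _ _

/-- The linear extension of `P` to `A`. -/
noncomputable def PA : AlgT K D →ₗ[K] AlgT K D :=
  Finsupp.lmapDomain K K (fun x : BasisT D => ⟨x.2.1, x.1⁻¹ * x.2.1⁻¹, D.P x.1 x.2.1 x.2.2⟩)

/-- The extension of `m` to basis elements of `A`: it is `m` on admissible triples of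
basis elements and `0` otherwise. -/
noncomputable def mb (x y z : BasisT D) : AlgT K D :=
  if hc : x.2.1 = y.1⁻¹ ∧ z.1 = y.1⁻¹ * x.1 ∧ z.2.1 = y.2.1 * y.1 then
    Finsupp.single
      ⟨x.1, y.2.1,
        castT D.T rfl (show (y.2.1⁻¹)⁻¹ = y.2.1 by group)
          (D.m x.1 y.1 y.2.1⁻¹
            (castT D.T rfl hc.1 x.2.2)
            (castT D.T rfl (show y.2.1 = (y.2.1⁻¹)⁻¹ by group) y.2.2)
            (castT D.T hc.2.1
              (hc.2.2.trans (show y.2.1 * y.1 = (y.2.1⁻¹)⁻¹ * y.1 by group)) z.2.2))⟩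
      (1 : K)
  else 0

/-- The trilinear extension of `m` to `A`. -/
noncomputable def mA (a b c : AlgT K D) : AlgT K D :=
  a.sum fun i ai => b.sum fun j bj => c.sum fun l cl => (ai * bj * cl) • mb K D i j l

/-- `u(1) = Σ_{g,h∈G} (1/#T(g,h)) Σ_{x∈T(g,h)} x ⊗ Q(x)`. -/
noncomputable def uA : AlgT K D ⊗[K] AlgT K D :=
  ∑ g : G, ∑ h : G, (Fintype.card (D.T g h) : K)⁻¹ •
    ∑ x : D.T g h,
      (Finsupp.single (⟨g, h, x⟩ : BasisT D) (1 : K)) ⊗ₜ[K]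
        (Finsupp.single (⟨g⁻¹, h * g, D.Q g h x⟩ : BasisT D) (1 : K))

set_option linter.unusedSectionVars false

section CastLemmas

variable {G : Type} [Group G]

lemma castT_heq {T : G → G → Type} {a b c d : G} (h1 : a = b) (h2 : c = d) (x : T a c) :
    HEq (castT T h1 h2 x) x := by subst h1; subst h2; rfl

lemma castT_heq_left {T : G → G → Type} {a b c d : G} (h1 : a = b) (h2 : c = d) (x : T a c)
    {γ : Type} {y : γ} : HEq (castT T h1 h2 x) y ↔ HEq x y := by subst h1; subst h2; rfl

lemma castT_heq_right {T : G → G → Type} {a b c d : G} (h1 : a = b) (h2 : c = d) (x : T a c)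
    {γ : Type} {y : γ} : HEq y (castT T h1 h2 x) ↔ HEq y x := by subst h1; subst h2; rfl

lemma sigma_mk_castT {T : G → G → Type} {a b c d : G} (h1 : a = b) (h2 : c = d) (x : T a c) :
    (⟨b, d, castT T h1 h2 x⟩ : Σ g : G, Σ h : G, T g h) = ⟨a, c, x⟩ := by
  subst h1; subst h2; rfl

lemma mk3_eq {T : G → G → Type} {g g' h h' : G} {v : T g h} {v' : T g' h'}
    (e1 : g = g') (e2 : h = h') (e3 : HEq v v') :
    (⟨g, h, v⟩ : Σ a : G, Σ b : G, T a b) = ⟨g', h', v'⟩ := by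
  subst e1; subst e2; cases e3; rfl

variable (D : DeltaGroup G)

lemma m_heq {g g' h h' k k' : G} (hg : g = g') (hh : h = h') (hk : k = k')
    {a : D.T g h⁻¹} {a' : D.T g' h'⁻¹} {b : D.T h k⁻¹} {b' : D.T h' k'⁻¹}
    {c : D.T (h⁻¹ * g) (k⁻¹ * h)} {c' : D.T (h'⁻¹ * g') (k'⁻¹ * h')}
    (ha : HEq a a') (hb : HEq b b') (hc : HEq c c') :
    HEq (D.m g h k a b c) (D.m g' h' k' a' b' c') := by
  subst hg; subst hh; subst hk; cases ha; cases hb; cases hc; rfl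

lemma P_heq {g g' h h' : G} (hg : g = g') (hh : h = h')
    {a : D.T g h} {a' : D.T g' h'} (ha : HEq a a') :
    HEq (D.P g h a) (D.P g' h' a') := by
  subst hg; subst hh; cases ha; rfl

lemma Q_heq {g g' h h' : G} (hg : g = g') (hh : h = h')
    {a : D.T g h} {a' : D.T g' h'} (ha : HEq a a') :
    HEq (D.Q g h a) (D.Q g' h' a') := by
  subst hg; subst hh; cases ha; rfl

/-- `P` as a map on the total basis. -/
def fP : (Σ g : G, Σ h : G, D.T g h) → Σ g : G, Σ h : G, D.T g h :=
  fun x => ⟨x.2.1, x.1⁻¹ * x.2.1⁻¹, D.P x.1 x.2.1 x.2.2⟩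

/-- `Q` as a map on the total basis. -/
def fQ : (Σ g : G, Σ h : G, D.T g h) → Σ g : G, Σ h : G, D.T g h :=
  fun x => ⟨x.1⁻¹, x.2.1 * x.1, D.Q x.1 x.2.1 x.2.2⟩

lemma fP3 (x : Σ g : G, Σ h : G, D.T g h) : fP D (fP D (fP D x)) = x := by
  obtain ⟨g, h, v⟩ := x
  show (⟨_, _, D.P _ _ (D.P _ _ (D.P g h v))⟩ : Σ g : G, Σ h : G, D.T g h) = _
  rw [D.hP3, sigma_mk_castT]

lemma fQ2 (x : Σ g : G, Σ h : G, D.T g h) : fQ D (fQ D x) = x := by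
  obtain ⟨g, h, v⟩ := x
  show (⟨_, _, D.Q _ _ (D.Q g h v)⟩ : Σ g : G, Σ h : G, D.T g h) = _
  rw [D.hQ2, sigma_mk_castT]

lemma fPPQ (x : Σ g : G, Σ h : G, D.T g h) : fP D (fP D (fQ D x)) = fQ D (fP D x) := by
  obtain ⟨g, h, v⟩ := x
  show (⟨_, _, D.P _ _ (D.P _ _ (D.Q g h v))⟩ : Σ g : G, Σ h : G, D.T g h) = _
  rw [D.hPQ, sigma_mk_castT]; rfl

lemma castT_inj {T : G → G → Type} {a b c d : G} (h1 : a = b) (h2 : c = d) {x y : T a c}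
    (h : castT T h1 h2 x = castT T h1 h2 y) : x = y := by
  subst h1; subst h2; exact h

lemma P_inj (g h : G) : Function.Injective (D.P g h) := by
  intro a b hab
  have := congrArg (D.P _ _) (congrArg (D.P _ _) hab)
  rw [D.hP3, D.hP3] at this
  exact castT_inj _ _ this

lemma Q_inj (g h : G) : Function.Injective (D.Q g h) := by
  intro a b hab
  have := congrArg (D.Q _ _) hab
  rw [D.hQ2, D.hQ2] at this
  exact castT_inj _ _ this

variable [∀ g h : G, Fintype (D.T g h)]

lemma cardP (g h : G) :
    Fintype.card (D.T h (g⁻¹ * h⁻¹)) = Fintype.card (D.T g h) := by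
  have l1 := Fintype.card_le_of_injective _ (P_inj D g h)
  have l2 := Fintype.card_le_of_injective _ (P_inj D h (g⁻¹ * h⁻¹))
  have l3 := Fintype.card_le_of_injective _
    (P_inj D (g⁻¹ * h⁻¹) (h⁻¹ * (g⁻¹ * h⁻¹)⁻¹))
  have e : Fintype.card
      (D.T (h⁻¹ * (g⁻¹ * h⁻¹)⁻¹) ((g⁻¹ * h⁻¹)⁻¹ * (h⁻¹ * (g⁻¹ * h⁻¹)⁻¹)⁻¹)) =
      Fintype.card (D.T g h) := by
    have e1 : h⁻¹ * (g⁻¹ * h⁻¹)⁻¹ = g := by group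
    have e2 : (g⁻¹ * h⁻¹)⁻¹ * (h⁻¹ * (g⁻¹ * h⁻¹)⁻¹)⁻¹ = h := by group
    rw [e2, e1]
  exact le_antisymm (l2.trans (l3.trans e.le)) l1

lemma cardQ (g h : G) :
    Fintype.card (D.T g⁻¹ (h * g)) = Fintype.card (D.T g h) := by
  have l1 := Fintype.card_le_of_injective _ (Q_inj D g h)
  have l2 := Fintype.card_le_of_injective _ (Q_inj D g⁻¹ (h * g))
  have e : Fintype.card (D.T g⁻¹⁻¹ (h * g * g⁻¹)) = Fintype.card (D.T g h) := by
    have e1 : g⁻¹⁻¹ = g := by group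
    have e2 : h * g * g⁻¹ = h := by group
    rw [e2, e1]
  exact le_antisymm (l2.trans e.le) l1

end CastLemmas

section Main

variable {G : Type} [Group G] [Fintype G] [DecidableEq G]
variable (K : Type) [Field K]
variable (D : DeltaGroup G) [∀ g h : G, Fintype (D.T g h)] [∀ g h : G, DecidableEq (D.T g h)]

noncomputable instance : Fintype (BasisT D) :=
  inferInstanceAs (Fintype (Σ g : G, Σ h : G, D.T g h))

lemma PAeq (v : AlgT K D) : PA K D v = Finsupp.mapDomain (fP D) v := rfl

lemma PA_single (b : Σ g : G, Σ h : G, D.T g h) (k : K) :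
    PA K D (Finsupp.single (α := Σ g : G, Σ h : G, D.T g h) b k) =
      (Finsupp.single (α := Σ g : G, Σ h : G, D.T g h) (fP D b) k : AlgT K D) := by
  erw [PAeq, Finsupp.mapDomain_single]

lemma PA3 : PA K D ∘ₗ PA K D ∘ₗ PA K D = LinearMap.id := by
  apply LinearMap.ext
  intro v
  simp only [LinearMap.comp_apply, LinearMap.id_apply, PAeq]
  erw [← Finsupp.mapDomain_comp, ← Finsupp.mapDomain_comp,
    show ((fP D ∘ fP D) ∘ fP D) = id from funext fun x => fP3 D x,
    Finsupp.mapDomain_id]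

lemma mb_fP (x y z : BasisT D) :
    Finsupp.mapDomain (fP D) (mb K D x y z) = mb K D (fP D y) (fP D z) (fP D x) := by
  obtain ⟨xg, xh, xv⟩ := x
  obtain ⟨yg, yh, yv⟩ := y
  obtain ⟨zg, zh, zv⟩ := z
  by_cases hc : xh = yg⁻¹ ∧ zg = yg⁻¹ * xg ∧ zh = yh * yg
  · obtain ⟨h1, h2, h3⟩ := hc
    subst h1; subst h2; subst h3
    simp only [mb, fP]
    erw [dif_pos (⟨rfl, rfl, rfl⟩ : yg⁻¹ = yg⁻¹ ∧ yg⁻¹ * xg = yg⁻¹ * xg ∧ yh * yg = yh * yg),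
      dif_pos (show yg⁻¹ * yh⁻¹ = (yh * yg)⁻¹ ∧ yg⁻¹ = (yh * yg)⁻¹ * yh ∧
          xg⁻¹ * yg⁻¹⁻¹ = (yg⁻¹ * xg)⁻¹ * (yh * yg)⁻¹ * (yh * yg) from
        ⟨by group, by group, by group⟩),
      Finsupp.mapDomain_single]
    refine congrArg (fun s => Finsupp.single s (1 : K)) ?_
    simp only [fP]
    refine mk3_eq rfl (by group) ?_
    refine HEq.trans ?_ (castT_heq _ _ _).symm
    refine HEq.trans (P_heq D rfl ?e1 (castT_heq _ _ _)) ?main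
    case e1 => group
    refine HEq.trans (heq_of_eq (D.hPm xg yg yh⁻¹ _ _ _)) ?_
    refine HEq.trans (castT_heq _ _ _) ?_
    refine m_heq D (by group) (by group) (by group) ?_ ?_ ?_ <;>
      · refine HEq.trans (castT_heq _ _ _)
          (HEq.trans (P_heq D ?_ ?_ (castT_heq _ _ _)) (castT_heq _ _ _).symm) <;> group
  · have hc' : ¬(yg⁻¹ * yh⁻¹ = zh⁻¹ ∧ xh = zh⁻¹ * yh ∧
        xg⁻¹ * xh⁻¹ = zg⁻¹ * zh⁻¹ * zh) := by
      rintro ⟨H1, H2, H3⟩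
      apply hc
      have e3 : zh = yh * yg := by rw [← inv_inv zh, ← H1]; group
      have e1 : xh = yg⁻¹ := by rw [H2, e3]; group
      refine ⟨e1, ?_, e3⟩
      have e2 : zg⁻¹ = xg⁻¹ * xh⁻¹ := by rw [H3]; group
      rw [← inv_inv zg, e2, e1]; group
    simp only [mb, fP]
    erw [dif_neg hc, dif_neg hc', Finsupp.mapDomain_zero]; rfl

lemma sum3_comm {β : Type} [AddCommMonoid β] (a b c : AlgT K D)
    (F : BasisT D → K → BasisT D → K → BasisT D → K → β) :
    (a.sum fun i ai => b.sum fun j bj => c.sum fun l cl => F i ai j bj l cl) =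
      b.sum fun j bj => c.sum fun l cl => a.sum fun i ai => F i ai j bj l cl := by
  rw [Finsupp.sum_comm a b]
  refine Finsupp.sum_congr fun j _ => ?_
  rw [Finsupp.sum_comm a c]

lemma PA_mA (a b c : AlgT K D) :
    PA K D (mA K D a b c) = mA K D (PA K D b) (PA K D c) (PA K D a) := by
  have hinj : Function.Injective (fP D) :=
    Function.LeftInverse.injective (g := fun x => fP D (fP D x)) (fun x => fP3 D x)
  have key : ∀ i j l : BasisT D,
      PA K D (mb K D i j l) = mb K D (fP D j) (fP D l) (fP D i) := by
    intro i j l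
    rw [PAeq K D]; exact mb_fP K D i j l
  revert a b c
  show ∀ a b c : BasisT D →₀ K, PA K D (mA K D a b c) = mA K D (PA K D b) (PA K D c) (PA K D a)
  intro a b c
  rw [show mA K D a b c = a.sum fun i ai => b.sum fun j bj => c.sum fun l cl =>
    (ai * bj * cl) • mb K D i j l from rfl, map_finsuppSum]
  simp only [map_finsuppSum, map_smul, key]
  rw [mA, PAeq K D a, PAeq K D b, PAeq K D c]
  erw [sum3_comm, Finsupp.sum_mapDomain_index_inj hinj]
  refine Finsupp.sum_congr fun j _ => ?_
  erw [Finsupp.sum_mapDomain_index_inj hinj]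
  refine Finsupp.sum_congr fun l _ => ?_
  erw [Finsupp.sum_mapDomain_index_inj hinj]
  refine Finsupp.sum_congr fun i _ => ?_
  rw [mul_rotate]

/-- The summand of `u`. -/
noncomputable def Ffun (b : Σ g : G, Σ h : G, D.T g h) : AlgT K D ⊗[K] AlgT K D :=
  (Fintype.card (D.T b.1 b.2.1) : K)⁻¹ •
    ((Finsupp.single (α := Σ g : G, Σ h : G, D.T g h) b (1 : K) : AlgT K D) ⊗ₜ[K]
      (Finsupp.single (α := Σ g : G, Σ h : G, D.T g h) (fQ D b) (1 : K) : AlgT K D))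

lemma sum_basis {M : Type} [AddCommMonoid M] (F : (Σ g : G, Σ h : G, D.T g h) → M) :
    ∑ b : BasisT D, F b = ∑ g : G, ∑ h : G, ∑ x : D.T g h, F ⟨g, h, x⟩ := by
  show ∑ b : (Σ g : G, Σ h : G, D.T g h), F b = _
  rw [← Finset.univ_sigma_univ, Finset.sum_sigma]
  refine Finset.sum_congr rfl fun g _ => ?_
  rw [← Finset.univ_sigma_univ, Finset.sum_sigma]

lemma uA_eq : uA K D = ∑ b : BasisT D, Ffun K D b := by
  rw [uA, sum_basis]
  refine Finset.sum_congr rfl fun g _ => Finset.sum_congr rfl fun h _ => ?_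
  rw [Finset.smul_sum]
  rfl

set_option maxHeartbeats 1000000 in
set_option synthInstance.maxHeartbeats 200000 in
lemma part1 : uA K D = TensorProduct.map (PA K D ∘ₗ PA K D) (PA K D)
      ((TensorProduct.comm K (AlgT K D) (AlgT K D)) (uA K D)) := by
  have hli : Function.LeftInverse (fun x => fP D (fP D x)) (fP D) := fun x => fP3 D x
  have hre : Function.RightInverse (fun x => fP D (fP D x)) (fP D) := fun x => fP3 D x
  have hPbij : Function.Bijective (fP D) := ⟨hli.injective, hre.surjective⟩
  have hQbij : Function.Bijective (fQ D) := Function.Involutive.bijective (fQ2 D)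
  have hfppq : ∀ (g h : G) (x : D.T g h),
      fP D (fP D (⟨g⁻¹, h * g, D.Q g h x⟩ : Σ g : G, Σ h : G, D.T g h)) =
        fQ D (fP D ⟨g, h, x⟩) :=
    fun g h x => fPPQ D ⟨g, h, x⟩
  have step : ∀ (g h : G) (x : D.T g h),
      (Fintype.card (D.T g h) : K)⁻¹ •
        ((Finsupp.single (α := Σ g : G, Σ h : G, D.T g h) (fQ D (fP D ⟨g, h, x⟩)) (1 : K) :
            AlgT K D) ⊗ₜ[K]
          (Finsupp.single (α := Σ g : G, Σ h : G, D.T g h) (fP D ⟨g, h, x⟩) (1 : K) :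
            AlgT K D)) =
      Ffun K D (fQ D (fP D ⟨g, h, x⟩)) := by
    intro g h x
    simp only [Ffun, fQ, fP]
    rw [D.hQ2, sigma_mk_castT]; erw [cardQ, cardP]
  conv_rhs => rw [uA_eq]
  erw [map_sum, map_sum]
  rw [uA_eq,
    show (∑ b : BasisT D, Ffun K D b) = ∑ b : BasisT D, Ffun K D (fQ D (fP D b)) from
      (Fintype.sum_bijective (fQ D ∘ fP D) (hQbij.comp hPbij) _ _ (fun b => rfl)).symm]
  refine Finset.sum_congr rfl fun b _ => ?_
  obtain ⟨g, h, x⟩ := b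
  rw [← step]
  erw [Ffun, map_smul, map_smul, TensorProduct.comm_tmul]
  exact congrArg _ ((TensorProduct.map_tmul _ _ _ _).trans (by
    erw [LinearMap.comp_apply, PA_single, PA_single, PA_single, fPPQ])).symm

end Main
/-- For a finite Δ-group `T` based at a finite group `G`, over a field `K` whose
characteristic divides no `#T(g,h)`, the element `u` satisfies the symmetry
`u(1) = Σ P²(u₂) ⊗ P(u₁)`, and `P³ = id` and `P(m(a⊗b⊗c)) = m(P(b)⊗P(c)⊗P(a))`
hold on `A`. -/
theorem delta_group_strong_three_algebra
    (hchar : ∀ g h : G, (Fintype.card (D.T g h) : K) ≠ 0) :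
    uA K D =
      TensorProduct.map (PA K D ∘ₗ PA K D) (PA K D)
        ((TensorProduct.comm K (AlgT K D) (AlgT K D)) (uA K D)) ∧
    (PA K D ∘ₗ PA K D ∘ₗ PA K D = LinearMap.id) ∧
    (∀ a b c : AlgT K D, PA K D (mA K D a b c) = mA K D (PA K D b) (PA K D c) (PA K D a)) := by
  exact ⟨part1 K D, PA3 K D, PA_mA K D⟩
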